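/- Every weakly additive, order-preserving, normed functional (i.e., with $f(x_0) = 1$) on a partially ordered vector space with interior point $x_0$ of the positive cone is continuous. -/

import Mathlib

def InnerSeg {L : Type*} [AddCommGroup L] [Module ℝ L] (a b x : L) : Prop :=
  x ∈ segment ℝ a b ∧ x ≠ a ∧ x ≠ b

def InnerPoint {L : Type*} [AddCommGroup L] [Module ℝ L] (S : Set L) (x : L) : Prop :=
  x ∈ S ∧ ∀ a b : L, InnerSeg a b x →
    ∃ c d : L, c ∈ segment ℝ a b ∩ S ∧ d ∈ segment ℝ a b ∩ S ∧ InnerSeg c d x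

def coneNbhd {L : Type*} [AddCommGroup L] [PartialOrder L] [Module ℝ L]
    (x₀ z : L) (δ : ℝ) : Set L :=
  {y : L | InnerPoint {v : L | 0 ≤ v} (δ • x₀ + (y - z)) ∧
           InnerPoint {v : L | 0 ≤ v} (δ • x₀ - (y - z))}

def coneTop {L : Type*} [AddCommGroup L] [PartialOrder L] [Module ℝ L]
    (x₀ : L) : TopologicalSpace L :=
  TopologicalSpace.generateFrom {s : Set L | ∃ z : L, ∃ δ : ℝ, 0 < δ ∧ s = coneNbhd x₀ z δ}

def WeaklyAdditive {L : Type*} [AddCommGroup L] [Module ℝ L] (x₀ : L) (f : L → ℝ) : Prop :=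
  ∀ x : L, ∀ l : ℝ, f (x + l • x₀) = f x + l * f x₀

private lemma seg_smul {L : Type*} [AddCommGroup L] [Module ℝ L] (δ : ℝ) {a b x : L}
    (h : x ∈ segment ℝ a b) : δ • x ∈ segment ℝ (δ • a) (δ • b) := by
  obtain ⟨s, t, hs, ht, hst, rfl⟩ := h
  exact ⟨s, t, hs, ht, hst, by module⟩

private lemma innerPoint_smul {L : Type*} [AddCommGroup L] [PartialOrder L] [IsOrderedAddMonoid L] [Module ℝ L] [PosSMulStrictMono ℝ L] [PosSMulReflectLT ℝ L]
    {δ : ℝ} (hδ : 0 < δ) {x : L}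
    (hx : InnerPoint {v : L | 0 ≤ v} x) : InnerPoint {v : L | 0 ≤ v} (δ • x) := by
  have hinj : Function.Injective (fun v : L => δ • v) :=
    smul_right_injective L hδ.ne'
  constructor
  · exact smul_nonneg hδ.le hx.1
  · rintro a b ⟨hseg, hna, hnb⟩
    have h1 : x ∈ segment ℝ (δ⁻¹ • a) (δ⁻¹ • b) := by
      have := seg_smul δ⁻¹ hseg
      rwa [inv_smul_smul₀ hδ.ne'] at this
    have hxa : x ≠ δ⁻¹ • a := by
      intro h; apply hna
      rw [h, smul_inv_smul₀ hδ.ne']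
    have hxb : x ≠ δ⁻¹ • b := by
      intro h; apply hnb
      rw [h, smul_inv_smul₀ hδ.ne']
    obtain ⟨c, d, ⟨hcseg, hcS⟩, ⟨hdseg, hdS⟩, hcd1, hcd2, hcd3⟩ :=
      hx.2 (δ⁻¹ • a) (δ⁻¹ • b) ⟨h1, hxa, hxb⟩
    refine ⟨δ • c, δ • d, ⟨?_, smul_nonneg hδ.le hcS⟩, ⟨?_, smul_nonneg hδ.le hdS⟩,
      seg_smul δ hcd1, fun h => hcd2 (hinj h), fun h => hcd3 (hinj h)⟩
    · have := seg_smul δ hcseg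
      rwa [smul_inv_smul₀ hδ.ne', smul_inv_smul₀ hδ.ne'] at this
    · have := seg_smul δ hdseg
      rwa [smul_inv_smul₀ hδ.ne', smul_inv_smul₀ hδ.ne'] at this

theorem stmt8 {L : Type*} [AddCommGroup L] [PartialOrder L] [IsOrderedAddMonoid L] [Module ℝ L] [PosSMulStrictMono ℝ L] [PosSMulReflectLT ℝ L]
    (x₀ : L) (hx₀ : InnerPoint {v : L | 0 ≤ v} x₀)
    (f : L → ℝ) (hwa : WeaklyAdditive x₀ f) (hmono : Monotone f)
    (hnormed : f x₀ = 1) :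
    @Continuous L ℝ (coneTop x₀) _ f := by
  letI := coneTop x₀
  rw [continuous_def]
  intro U hU
  rw [isOpen_iff_forall_mem_open]
  intro y hy
  obtain ⟨ε, hε, hball⟩ := Metric.isOpen_iff.mp hU (f y) hy
  set δ := ε / 2 with hδdef
  have hδ : 0 < δ := by positivity
  refine ⟨coneNbhd x₀ y δ, ?_, ?_, ?_⟩
  · -- coneNbhd ⊆ f ⁻¹' U
    intro w hw
    have h1 : (0:L) ≤ δ • x₀ + (w - y) := hw.1.1
    have h2 : (0:L) ≤ δ • x₀ - (w - y) := hw.2.1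
    have hle1 : y + (-δ) • x₀ ≤ w := by
      rw [← sub_nonneg]
      have : w - (y + (-δ) • x₀) = δ • x₀ + (w - y) := by module
      rw [this]; exact h1
    have hle2 : w ≤ y + δ • x₀ := by
      rw [← sub_nonneg]
      have : y + δ • x₀ - w = δ • x₀ - (w - y) := by module
      rw [this]; exact h2
    have hf1 : f y - δ ≤ f w := by
      have := hmono hle1
      rw [hwa y (-δ), hnormed] at this
      linarith
    have hf2 : f w ≤ f y + δ := by
      have := hmono hle2
      rw [hwa y δ, hnormed] at this
      linarith
    apply hball
    rw [Metric.mem_ball, Real.dist_eq, abs_sub_lt_iff]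
    constructor <;> [linarith; linarith]
  · exact TopologicalSpace.isOpen_generateFrom_of_mem ⟨y, δ, hδ, rfl⟩
  · -- y ∈ coneNbhd x₀ y δ
    have : InnerPoint {v : L | 0 ≤ v} (δ • x₀) := innerPoint_smul hδ hx₀
    constructor <;> simpa using this
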